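/- Let B be an associative unital algebra over a field k and R ∈ B⊗B an element satisfying the quantum Yang–Baxter equation R₁₂R₁₃R₂₃ = R₂₃R₁₃R₁₂ in B⊗B⊗B. Let φ, ψ : B → B be unital algebra homomorphisms such that (φ⊗id)(R) = (id⊗ψ)(R); denote this common element by R̂, and set R̃ = (φ⊗ψ)(R). Then R̂₁₃R̂₁₂R̃₁₃R̂₂₃ = R̂₁₃R̂₂₃R̃₁₃R̂₁₂ in B⊗B⊗B. -/

import Mathlib

open TensorProduct

noncomputable section

namespace WHA

variable (k B : Type*) [Field k] [Ring B] [Algebra k B]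

/-- `x ↦ x ⊗ 1`, the embedding of `B ⊗ B` into legs 1,2 of `B ⊗ B ⊗ B`. -/
def leg12 : B ⊗[k] B →ₗ[k] B ⊗[k] (B ⊗[k] B) :=
  (TensorProduct.assoc k B B B).toLinearMap ∘ₗ (TensorProduct.mk k (B ⊗[k] B) B).flip 1

/-- `x ↦ 1 ⊗ x`, the embedding of `B ⊗ B` into legs 2,3 of `B ⊗ B ⊗ B`. -/
def leg23 : B ⊗[k] B →ₗ[k] B ⊗[k] (B ⊗[k] B) :=
  TensorProduct.mk k B (B ⊗[k] B) 1

/-- `a ⊗ b ↦ a ⊗ 1 ⊗ b`, the embedding of `B ⊗ B` into legs 1,3 of `B ⊗ B ⊗ B`. -/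
def leg13 : B ⊗[k] B →ₗ[k] B ⊗[k] (B ⊗[k] B) :=
  TensorProduct.map LinearMap.id (TensorProduct.mk k B B 1)

end WHA

/-- if `R` satisfies the quantum Yang–Baxter equation,
`R̂ = (φ⊗id)(R) = (id⊗ψ)(R)` and `R̃ = (φ⊗ψ)(R)`, then
`R̂₁₃R̂₁₂R̃₁₃R̂₂₃ = R̂₁₃R̂₂₃R̃₁₃R̂₁₂`. -/
theorem qybe_hat_tilde_identity
    (k B : Type*) [Field k] [Ring B] [Algebra k B]
    (R : B ⊗[k] B)
    (hQYBE : WHA.leg12 k B R * WHA.leg13 k B R * WHA.leg23 k B R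
        = WHA.leg23 k B R * WHA.leg13 k B R * WHA.leg12 k B R)
    (φ ψ : B →ₐ[k] B)
    (Rhat : B ⊗[k] B)
    (hhat₁ : Rhat = Algebra.TensorProduct.map φ (AlgHom.id k B) R)
    (hhat₂ : Rhat = Algebra.TensorProduct.map (AlgHom.id k B) ψ R)
    (Rtilde : B ⊗[k] B)
    (htilde : Rtilde = Algebra.TensorProduct.map φ ψ R) :
    WHA.leg13 k B Rhat * WHA.leg12 k B Rhat * WHA.leg13 k B Rtilde * WHA.leg23 k B Rhat
      = WHA.leg13 k B Rhat * WHA.leg23 k B Rhat * WHA.leg13 k B Rtilde *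
          WHA.leg12 k B Rhat := by
  set F : B ⊗[k] (B ⊗[k] B) →ₐ[k] B ⊗[k] (B ⊗[k] B) :=
    Algebra.TensorProduct.map φ (Algebra.TensorProduct.map (AlgHom.id k B) ψ) with hF
  have h12 : ∀ x : B ⊗[k] B, F (WHA.leg12 k B x)
      = WHA.leg12 k B (Algebra.TensorProduct.map φ (AlgHom.id k B) x) := by
    intro x
    induction x using TensorProduct.induction_on with
    | zero => simp
    | tmul a b => simp [WHA.leg12, hF]
    | add x y hx hy => simp only [map_add, hx, hy]
  have h23 : ∀ x : B ⊗[k] B, F (WHA.leg23 k B x)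
      = WHA.leg23 k B (Algebra.TensorProduct.map (AlgHom.id k B) ψ x) := by
    intro x
    simp [WHA.leg23, hF]
  have h13 : ∀ x : B ⊗[k] B, F (WHA.leg13 k B x)
      = WHA.leg13 k B (Algebra.TensorProduct.map φ ψ x) := by
    intro x
    induction x using TensorProduct.induction_on with
    | zero => simp
    | tmul a b => simp [WHA.leg13, hF]
    | add x y hx hy => simp only [map_add, hx, hy]
  have key := congrArg F hQYBE
  simp only [map_mul, h12, h13, h23, ← hhat₁, ← hhat₂, ← htilde] at key
  calc WHA.leg13 k B Rhat * WHA.leg12 k B Rhat * WHA.leg13 k B Rtilde * WHA.leg23 k B Rhat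
      = WHA.leg13 k B Rhat * (WHA.leg12 k B Rhat * WHA.leg13 k B Rtilde * WHA.leg23 k B Rhat) := by
        simp only [mul_assoc]
    _ = WHA.leg13 k B Rhat * (WHA.leg23 k B Rhat * WHA.leg13 k B Rtilde * WHA.leg12 k B Rhat) := by
        rw [key]
    _ = _ := by simp only [mul_assoc]
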